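/- arXiv:2309.09576 — 2 statements merged into one kernel-verified Lean document; each statement's English description precedes it below -/
import Mathlib

section
/- Let E be a finite-dimensional real inner product space, F₁ and F₂ subspaces of E, and π₁, π₂ the orthogonal projections onto F₁ and F₂ respectively. Then F₁ is the internal direct sum of the image of π₁ restricted to F₂ and the kernel of π₂ restricted to F₁, i.e. F₁ = im(π₁|_{F₂}) ⊕ ker(π₂|_{F₁}). -/
/-- Projector lemma: F₁ = im(π₁|_{F₂}) ⊕ ker(π₂|_{F₁}). -/
theorem stmt_0 {E : Type*} [NormedAddCommGroup E] [InnerProductSpace ℝ E]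
    [FiniteDimensional ℝ E] (F₁ F₂ : Submodule ℝ E) :
    let π₁ : E →ₗ[ℝ] E := F₁.subtype ∘ₗ (Submodule.orthogonalProjectionOnto F₁ : E →L[ℝ] F₁).toLinearMap
    let π₂ : E →ₗ[ℝ] E := F₂.subtype ∘ₗ (Submodule.orthogonalProjectionOnto F₂ : E →L[ℝ] F₂).toLinearMap
    F₁ = Submodule.map π₁ F₂ ⊔ (F₁ ⊓ LinearMap.ker π₂) ∧
      Disjoint (Submodule.map π₁ F₂) (F₁ ⊓ LinearMap.ker π₂) := by
  intro π₁ π₂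
  have hker : LinearMap.ker π₂ = F₂ᗮ := by
    ext x
    simp only [π₂, LinearMap.mem_ker, LinearMap.comp_apply, ContinuousLinearMap.coe_coe,
      Submodule.coe_subtype, ZeroMemClass.coe_eq_zero]
    have := Submodule.ext_iff.mp (Submodule.ker_orthogonalProjectionOnto (K := F₂)) x
    simpa using this
  have hsub : Submodule.map π₁ F₂ ≤ F₁ := by
    rintro x ⟨w, _, rfl⟩
    exact (Submodule.orthogonalProjectionOnto F₁ w).2
  have hperp : (Submodule.map π₁ F₂)ᗮ ⊓ F₁ = F₂ᗮ ⊓ F₁ := by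
    ext v
    simp only [Submodule.mem_inf, Submodule.mem_orthogonal]
    constructor
    · rintro ⟨hv, hvF₁⟩
      refine ⟨fun w hw => ?_, hvF₁⟩
      have := hv (π₁ w) ⟨w, hw, rfl⟩
      rwa [show (inner ℝ (π₁ w) v : ℝ) = inner ℝ w v by
        simp only [π₁, LinearMap.comp_apply, ContinuousLinearMap.coe_coe, Submodule.coe_subtype]
        rw [← Submodule.starProjection_apply, Submodule.inner_starProjection_left_eq_right,
          Submodule.starProjection_eq_self_iff.mpr hvF₁]] at this
    · rintro ⟨hv, hvF₁⟩
      refine ⟨?_, hvF₁⟩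
      rintro _ ⟨w, hw, rfl⟩
      rw [show (inner ℝ (π₁ w) v : ℝ) = inner ℝ w v by
        simp only [π₁, LinearMap.comp_apply, ContinuousLinearMap.coe_coe, Submodule.coe_subtype]
        rw [← Submodule.starProjection_apply, Submodule.inner_starProjection_left_eq_right,
          Submodule.starProjection_eq_self_iff.mpr hvF₁]]
      exact hv w hw
  constructor
  · have := Submodule.sup_orthogonal_inf_of_hasOrthogonalProjection hsub
    rw [hker, inf_comm F₁, ← hperp]
    exact this.symm
  · rw [hker, inf_comm F₁, ← hperp]
    exact (Submodule.orthogonal_disjoint _).mono_right inf_le_left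
end

section
/- With notation as in the projector lemma: if v ∈ F₁ satisfies π₂(v) = 0 and v = π₁(w) for some w ∈ F₂, then v = 0. In other words, im(π₁|_{F₂}) ∩ ker(π₂|_{F₁}) = {0}. -/
/-- In the projector lemma: im(π₁|_{F₂}) ∩ ker(π₂|_{F₁}) = {0}. -/
theorem stmt_2 {E : Type*} [NormedAddCommGroup E] [InnerProductSpace ℝ E]
    [FiniteDimensional ℝ E] (F₁ F₂ : Submodule ℝ E) :
    let π₁ : E →ₗ[ℝ] E := F₁.subtype ∘ₗ (F₁.orthogonalProjectionOnto : E →L[ℝ] F₁).toLinearMap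
    let π₂ : E →ₗ[ℝ] E := F₂.subtype ∘ₗ (F₂.orthogonalProjectionOnto : E →L[ℝ] F₂).toLinearMap
    ∀ v w : E, w ∈ F₂ → v = π₁ w → π₂ v = 0 → v = 0 := by
  intro π₁ π₂ v w hw hv hπv
  have hvF₁ : v ∈ F₁ := by
    rw [hv]; exact (F₁.orthogonalProjectionOnto w).2
  have h1 : (inner ℝ v v : ℝ) = inner ℝ w v := by
    nth_rewrite 1 [hv]
    simp only [π₁, LinearMap.comp_apply, Submodule.subtype_apply,
      ContinuousLinearMap.coe_coe]
    rw [← Submodule.starProjection_apply, Submodule.inner_starProjection_left_eq_right]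
    rw [Submodule.starProjection_eq_self_iff.2 hvF₁]
  have h2 : (inner ℝ v w : ℝ) = 0 := by
    have : (inner ℝ v w : ℝ) = inner ℝ (π₂ v) w := by
      simp only [π₂, LinearMap.comp_apply, Submodule.subtype_apply,
        ContinuousLinearMap.coe_coe]
      rw [← Submodule.starProjection_apply, Submodule.inner_starProjection_left_eq_right,
        Submodule.starProjection_eq_self_iff.2 hw]
    rw [this, hπv, inner_zero_left]
  have : (inner ℝ v v : ℝ) = 0 := h1.trans ((real_inner_comm v w).trans h2)
  exact inner_self_eq_zero.1 this
end
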